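/- Let $L$ be a Lie algebroid over $M$ and suppose $L_1, L_2$ are sub-Lie algebroids of $L$ with $L = L_1 \oplus L_2$ as vector bundles. Then the projections of the bracket define a flat $L_1$-connection on $L_2$ and a flat $L_2$-connection on $L_1$, and these satisfy the matched pair equations, making $(L_1, L_2)$ a matched pair of Lie algebroids. -/
import Mathlib


structure LieAlgebroid (k R L : Type*) [CommRing k] [CommRing R] [Algebra k R]
    [LieRing L] [LieAlgebra k L] [Module R L] [IsScalarTower k R L] where
  anchor : L →ₗ[R] Derivation k R R
  anchor_bracket : ∀ u v : L, anchor ⁅u, v⁆ = ⁅anchor u, anchor v⁆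
  leibniz : ∀ (u v : L) (f : R), ⁅u, f • v⁆ = f • ⁅u, v⁆ + anchor u f • v

structure LieAlgebroid.Connection {k R L : Type*} [CommRing k] [CommRing R] [Algebra k R]

/-- If a Lie algebroid `L` decomposes as a direct sum `L = L₁ ⊕ L₂` of two
sub-Lie algebroids, then the projected brackets `∇_{u₁}u₂ = pr₂{u₁,u₂}`,
`∇_{u₂}u₁ = pr₁{u₂,u₁}` define a flat `L₁`-connection on `L₂` and a flat
`L₂`-connection on `L₁` satisfying the matched pair equations:
`(L₁, L₂)` is a matched pair of Lie algebroids. -/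
theorem subalgebroid_decomposition_matchedPair {k R L : Type*}
    [CommRing k] [CommRing R] [Algebra k R]
    [LieRing L] [LieAlgebra k L] [Module R L] [IsScalarTower k R L]
    (A : LieAlgebroid k R L) (L₁ L₂ : Submodule R L)
    (hc₁ : ∀ u v, u ∈ L₁ → v ∈ L₁ → ⁅u, v⁆ ∈ L₁)
    (hc₂ : ∀ u v, u ∈ L₂ → v ∈ L₂ → ⁅u, v⁆ ∈ L₂)
    (pr₁ pr₂ : L →ₗ[R] L)
    (hr₁ : ∀ x, pr₁ x ∈ L₁) (hr₂ : ∀ x, pr₂ x ∈ L₂)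
    (hsum : ∀ x, pr₁ x + pr₂ x = x)
    (hid₁ : ∀ x ∈ L₁, pr₁ x = x) (hid₂ : ∀ x ∈ L₂, pr₂ x = x) :
    -- ∇_{u₁}u₂ := pr₂ ⁅u₁, u₂⁆ is an L₁-connection on L₂ (Leibniz rule) and it is flat
    (∀ u₁ ∈ L₁, ∀ u₂ ∈ L₂, ∀ f : R,
      pr₂ ⁅u₁, f • u₂⁆ = f • pr₂ ⁅u₁, u₂⁆ + A.anchor u₁ f • u₂) ∧
    (∀ u₁ ∈ L₁, ∀ v₁ ∈ L₁, ∀ u₂ ∈ L₂,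
      pr₂ ⁅u₁, pr₂ ⁅v₁, u₂⁆⁆ - pr₂ ⁅v₁, pr₂ ⁅u₁, u₂⁆⁆ = pr₂ ⁅⁅u₁, v₁⁆, u₂⁆) ∧
    -- ∇_{u₂}u₁ := pr₁ ⁅u₂, u₁⁆ is an L₂-connection on L₁ (Leibniz rule) and it is flat
    (∀ u₂ ∈ L₂, ∀ u₁ ∈ L₁, ∀ f : R,
      pr₁ ⁅u₂, f • u₁⁆ = f • pr₁ ⁅u₂, u₁⁆ + A.anchor u₂ f • u₁) ∧
    (∀ u₂ ∈ L₂, ∀ v₂ ∈ L₂, ∀ u₁ ∈ L₁,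
      pr₁ ⁅u₂, pr₁ ⁅v₂, u₁⁆⁆ - pr₁ ⁅v₂, pr₁ ⁅u₂, u₁⁆⁆ = pr₁ ⁅⁅u₂, v₂⁆, u₁⁆) ∧
    -- matched pair equation (i): compatibility of anchors
    (∀ u₁ ∈ L₁, ∀ u₂ ∈ L₂,
      ⁅A.anchor u₁, A.anchor u₂⁆ =
        -A.anchor (pr₁ ⁅u₂, u₁⁆) + A.anchor (pr₂ ⁅u₁, u₂⁆)) ∧
    -- matched pair equation (ii)
    (∀ u₁ ∈ L₁, ∀ u₂ ∈ L₂, ∀ v₂ ∈ L₂,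
      pr₂ ⁅u₁, ⁅u₂, v₂⁆⁆ =
        ⁅pr₂ ⁅u₁, u₂⁆, v₂⁆ + ⁅u₂, pr₂ ⁅u₁, v₂⁆⁆ +
          pr₂ ⁅pr₁ ⁅v₂, u₁⁆, u₂⁆ - pr₂ ⁅pr₁ ⁅u₂, u₁⁆, v₂⁆) ∧
    -- matched pair equation (iii)
    (∀ u₂ ∈ L₂, ∀ u₁ ∈ L₁, ∀ v₁ ∈ L₁,
      pr₁ ⁅u₂, ⁅u₁, v₁⁆⁆ =
        ⁅pr₁ ⁅u₂, u₁⁆, v₁⁆ + ⁅u₁, pr₁ ⁅u₂, v₁⁆⁆ +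
          pr₁ ⁅pr₂ ⁅v₁, u₂⁆, u₁⁆ - pr₁ ⁅pr₂ ⁅u₁, u₂⁆, v₁⁆) := by

  have hz₂ : ∀ x ∈ L₁, pr₂ x = 0 := by
    intro x hx
    have h := hsum x
    rw [hid₁ x hx] at h
    exact add_eq_left.mp h
  have hz₁ : ∀ x ∈ L₂, pr₁ x = 0 := by
    intro x hx
    have h := hsum x
    rw [hid₂ x hx, add_comm] at h
    exact add_eq_left.mp h
  refine ⟨?_, ?_, ?_, ?_, ?_, ?_, ?_⟩
  · intro u₁ h₁ u₂ h₂ f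
    rw [A.leibniz, map_add, map_smul, map_smul, hid₂ u₂ h₂]
  · intro u₁ h₁ v₁ hv₁ u₂ h₂
    have e1 : pr₂ ⁅v₁, u₂⁆ = ⁅v₁, u₂⁆ - pr₁ ⁅v₁, u₂⁆ := eq_sub_iff_add_eq'.mpr (hsum _)
    have e2 : pr₂ ⁅u₁, u₂⁆ = ⁅u₁, u₂⁆ - pr₁ ⁅u₁, u₂⁆ := eq_sub_iff_add_eq'.mpr (hsum _)
    rw [e1, e2, lie_sub, lie_sub, map_sub, map_sub,
      hz₂ _ (hc₁ _ _ h₁ (hr₁ _)), hz₂ _ (hc₁ _ _ hv₁ (hr₁ _))]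
    have jac : ⁅u₁, ⁅v₁, u₂⁆⁆ - ⁅v₁, ⁅u₁, u₂⁆⁆ = ⁅⁅u₁, v₁⁆, u₂⁆ := by
      rw [lie_lie]
    calc pr₂ ⁅u₁, ⁅v₁, u₂⁆⁆ - 0 - (pr₂ ⁅v₁, ⁅u₁, u₂⁆⁆ - 0)
        = pr₂ (⁅u₁, ⁅v₁, u₂⁆⁆ - ⁅v₁, ⁅u₁, u₂⁆⁆) := by rw [map_sub]; abel
      _ = pr₂ ⁅⁅u₁, v₁⁆, u₂⁆ := by rw [jac]
  · intro u₂ h₂ u₁ h₁ f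
    rw [A.leibniz, map_add, map_smul, map_smul, hid₁ u₁ h₁]
  · intro u₂ h₂ v₂ hv₂ u₁ h₁
    have e1 : pr₁ ⁅v₂, u₁⁆ = ⁅v₂, u₁⁆ - pr₂ ⁅v₂, u₁⁆ := eq_sub_iff_add_eq.mpr (hsum _)
    have e2 : pr₁ ⁅u₂, u₁⁆ = ⁅u₂, u₁⁆ - pr₂ ⁅u₂, u₁⁆ := eq_sub_iff_add_eq.mpr (hsum _)
    rw [e1, e2, lie_sub, lie_sub, map_sub, map_sub,
      hz₁ _ (hc₂ _ _ h₂ (hr₂ _)), hz₁ _ (hc₂ _ _ hv₂ (hr₂ _))]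
    have jac : ⁅u₂, ⁅v₂, u₁⁆⁆ - ⁅v₂, ⁅u₂, u₁⁆⁆ = ⁅⁅u₂, v₂⁆, u₁⁆ := by
      rw [lie_lie]
    calc pr₁ ⁅u₂, ⁅v₂, u₁⁆⁆ - 0 - (pr₁ ⁅v₂, ⁅u₂, u₁⁆⁆ - 0)
        = pr₁ (⁅u₂, ⁅v₂, u₁⁆⁆ - ⁅v₂, ⁅u₂, u₁⁆⁆) := by rw [map_sub]; abel
      _ = pr₁ ⁅⁅u₂, v₂⁆, u₁⁆ := by rw [jac]
  · intro u₁ h₁ u₂ h₂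
    have h : ⁅u₁, u₂⁆ = pr₁ ⁅u₁, u₂⁆ + pr₂ ⁅u₁, u₂⁆ := (hsum _).symm
    have hanti : pr₁ ⁅u₁, u₂⁆ = -pr₁ ⁅u₂, u₁⁆ := by
      rw [← map_neg, lie_skew]
    rw [← A.anchor_bracket, h, map_add, hanti, map_neg]
    rw [map_add, map_neg, hz₂ _ (hr₁ _), neg_zero, zero_add, hid₂ _ (hr₂ _)]
  · intro u₁ h₁ u₂ h₂ v₂ hv₂
    have jac : ⁅u₁, ⁅u₂, v₂⁆⁆ = ⁅⁅u₁, u₂⁆, v₂⁆ + ⁅u₂, ⁅u₁, v₂⁆⁆ := leibniz_lie u₁ u₂ v₂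
    have d1 : ⁅u₁, u₂⁆ = pr₁ ⁅u₁, u₂⁆ + pr₂ ⁅u₁, u₂⁆ := (hsum _).symm
    have d2 : ⁅u₁, v₂⁆ = pr₁ ⁅u₁, v₂⁆ + pr₂ ⁅u₁, v₂⁆ := (hsum _).symm
    have a1 : pr₁ ⁅u₁, u₂⁆ = -pr₁ ⁅u₂, u₁⁆ := by rw [← map_neg, lie_skew]
    have a2 : pr₁ ⁅u₁, v₂⁆ = -pr₁ ⁅v₂, u₁⁆ := by rw [← map_neg, lie_skew]
    have m1 : pr₂ ⁅pr₂ ⁅u₁, u₂⁆, v₂⁆ = ⁅pr₂ ⁅u₁, u₂⁆, v₂⁆ :=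
      hid₂ _ (hc₂ _ _ (hr₂ _) hv₂)
    have m2 : pr₂ ⁅u₂, pr₂ ⁅u₁, v₂⁆⁆ = ⁅u₂, pr₂ ⁅u₁, v₂⁆⁆ :=
      hid₂ _ (hc₂ _ _ h₂ (hr₂ _))
    conv_lhs => rw [jac]
    rw [map_add]
    conv_lhs => rw [d1, d2]
    rw [add_lie, lie_add, map_add, map_add, m1, m2, a1, a2, neg_lie, lie_neg,
      map_neg, map_neg, ← lie_skew u₂ (pr₁ ⁅v₂, u₁⁆), map_neg, neg_neg]
    abel
  · intro u₂ h₂ u₁ h₁ v₁ hv₁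
    have jac : ⁅u₂, ⁅u₁, v₁⁆⁆ = ⁅⁅u₂, u₁⁆, v₁⁆ + ⁅u₁, ⁅u₂, v₁⁆⁆ := leibniz_lie u₂ u₁ v₁
    have d1 : ⁅u₂, u₁⁆ = pr₁ ⁅u₂, u₁⁆ + pr₂ ⁅u₂, u₁⁆ := (hsum _).symm
    have d2 : ⁅u₂, v₁⁆ = pr₁ ⁅u₂, v₁⁆ + pr₂ ⁅u₂, v₁⁆ := (hsum _).symm
    have a1 : pr₂ ⁅u₂, u₁⁆ = -pr₂ ⁅u₁, u₂⁆ := by rw [← map_neg, lie_skew]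
    have a2 : pr₂ ⁅u₂, v₁⁆ = -pr₂ ⁅v₁, u₂⁆ := by rw [← map_neg, lie_skew]
    have m1 : pr₁ ⁅pr₁ ⁅u₂, u₁⁆, v₁⁆ = ⁅pr₁ ⁅u₂, u₁⁆, v₁⁆ :=
      hid₁ _ (hc₁ _ _ (hr₁ _) hv₁)
    have m2 : pr₁ ⁅u₁, pr₁ ⁅u₂, v₁⁆⁆ = ⁅u₁, pr₁ ⁅u₂, v₁⁆⁆ :=
      hid₁ _ (hc₁ _ _ h₁ (hr₁ _))
    conv_lhs => rw [jac]
    rw [map_add]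
    conv_lhs => rw [d1, d2]
    rw [add_lie, lie_add, map_add, map_add, m1, m2, a1, a2, neg_lie, lie_neg,
      map_neg, map_neg, ← lie_skew u₁ (pr₂ ⁅v₁, u₂⁆), map_neg, neg_neg]
    abel
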